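/- arXiv:2408.08990 — 2 statements merged into one kernel-verified Lean document; each statement's English description precedes it below -/
import Mathlib

section
/- Let (X_1,Y_1),...,(X_{n+1},Y_{n+1}) be i.i.d., let S : X × Y → ℝ be a fixed measurable conformity score, and let 𝔛 = {𝒳_1,...,𝒳_K} be a fixed measurable partition of X with P(X_1 ∈ 𝒳_k) > 0. Define Ĉ(X_{n+1}) = {y : S(X_{n+1},y) ≤ q_k} when X_{n+1} ∈ 𝒳_k, where q_k is the ⌈(1-α)(N_k+1)⌉-th smallest value of {S(X_i,Y_i) : i ≤ n, X_i ∈ 𝒳_k} (with N_k the number of such i, and q_k = +∞ if ⌈(1-α)(N_k+1)⌉ > N_k). Then P(Y_{n+1} ∈ Ĉ(X_{n+1}) | X_{n+1} ∈ 𝒳_k) ≥ 1-α for every k. -/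
open MeasureTheory ProbabilityTheory
open scoped ENNReal Classical

/-- The multiset of calibration conformity scores of the points whose covariate falls in the
group `G` (calibration indices being the first `n` of `Fin (n+1)`). -/
noncomputable def calibGroupScores {Ω 𝒳 𝒴 : Type*} (n : ℕ)
    (X : Fin (n + 1) → Ω → 𝒳) (Y : Fin (n + 1) → Ω → 𝒴)
    (S : 𝒳 → 𝒴 → ℝ) (G : Set 𝒳) (ω : Ω) : Multiset ℝ :=
  (Finset.univ.filter (fun i : Fin n => X i.castSucc ω ∈ G)).val.map
    (fun i => S (X i.castSucc ω) (Y i.castSucc ω))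

/-- The split-conformal coverage event within group `G`: writing `N` for the number of
calibration points in `G` and `t = ⌈(1-α)(N+1)⌉`, the test score is at most the `t`-th
smallest calibration score in the group (coverage being automatic when `t > N`, i.e. the
threshold is `+∞`). -/
noncomputable def groupCoverageEvent {Ω 𝒳 𝒴 : Type*} (n : ℕ)
    (X : Fin (n + 1) → Ω → 𝒳) (Y : Fin (n + 1) → Ω → 𝒴)
    (S : 𝒳 → 𝒴 → ℝ) (G : Set 𝒳) (α : ℝ) : Set Ω :=
  {ω | (calibGroupScores n X Y S G ω).card
          < (⌈(1 - α) * (((calibGroupScores n X Y S G ω).card : ℝ) + 1)⌉).toNat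
      ∨ S (X (Fin.last n) ω) (Y (Fin.last n) ω)
          ≤ (Multiset.sort (calibGroupScores n X Y S G ω) (· ≤ ·)).getD
              ((⌈(1 - α) * (((calibGroupScores n X Y S G ω).card : ℝ) + 1)⌉).toNat - 1) 0}


namespace SCAux

lemma orderEmbedding_le_apply {a b : ℕ} (f : Fin a ↪o Fin b) (i : Fin a) :
    (i : ℕ) ≤ (f i : ℕ) := by
  obtain ⟨i, hi⟩ := i
  induction i with
  | zero => exact Nat.zero_le _
  | succ j IH =>
    have hj : j < a := Nat.lt_of_succ_lt hi
    have h1 : (⟨j, hj⟩ : Fin a) < ⟨j + 1, hi⟩ := by simp [Fin.lt_def]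
    have h2 : ((f ⟨j, hj⟩ : Fin b) : ℕ) < ((f ⟨j + 1, hi⟩ : Fin b) : ℕ) := f.strictMono h1
    have h3 : j ≤ ((f ⟨j, hj⟩ : Fin b) : ℕ) := IH hj
    show j + 1 ≤ _
    omega

/-- If `l'` is a sorted sublist of a sorted list `l`, then entrywise `l ≤ l'`. -/
lemma getD_le_getD_of_sublist {l l' : List ℝ} (h : List.Sublist l' l) (hs : l.Pairwise (· ≤ ·))
    {i : ℕ} (hi : i < l'.length) : l.getD i 0 ≤ l'.getD i 0 := by
  obtain ⟨f, hf⟩ := List.sublist_iff_exists_fin_orderEmbedding_get_eq.1 h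
  have hfi := orderEmbedding_le_apply f ⟨i, hi⟩
  have hil : i < l.length := lt_of_le_of_lt hfi (f ⟨i, hi⟩).isLt
  rw [show l'.getD i 0 = l'.get ⟨i, hi⟩ from List.getD_eq_get _ _ ⟨i, hi⟩,
    show l.getD i 0 = l.get ⟨i, hil⟩ from List.getD_eq_get _ _ ⟨i, hil⟩, hf ⟨i, hi⟩]
  exact hs.rel_get_of_le (by exact hfi)

lemma count_le_le_of_sorted {l : List ℝ} (hs : l.Pairwise (· ≤ ·)) {t : ℕ}
    (h1 : 1 ≤ t) (h2 : t ≤ l.length) :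
    t ≤ l.countP (fun x => decide (x ≤ l.getD (t - 1) 0)) := by
  have hlt : t - 1 < l.length := by omega
  have hr : l.getD (t - 1) 0 = l.get ⟨t - 1, hlt⟩ := List.getD_eq_get _ _ ⟨t - 1, hlt⟩
  have hsub : List.Sublist (l.take t) l := List.take_sublist t l
  have hlen : (l.take t).length = t := by simp [List.length_take]; omega
  have hall : ∀ x ∈ l.take t, x ≤ l.getD (t - 1) 0 := by
    intro x hx
    obtain ⟨j, hj, hxe⟩ := List.mem_iff_getElem.1 hx
    have hjt : j < t := by simpa [hlen] using hj
    have hjl : j < l.length := by omega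
    have hgt : (l.take t)[j] = l[j] := by
      rw [List.getElem_take]
    rw [← hxe, hgt, hr]
    have := hs.rel_get_of_le (a := ⟨j, hjl⟩) (b := ⟨t - 1, hlt⟩) (by simp; omega)
    simpa using this
  calc t = (l.take t).countP (fun x => decide (x ≤ l.getD (t - 1) 0)) := by
        rw [List.countP_eq_length.2 (by intro x hx; simpa using hall x hx)]; omega
    _ ≤ l.countP _ := hsub.countP_le

lemma count_lt_le_of_sorted {l : List ℝ} (hs : l.Pairwise (· ≤ ·)) {t : ℕ}
    (h1 : 1 ≤ t) (h2 : t - 1 < l.length) :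
    l.countP (fun x => decide (x < l.getD (t - 1) 0)) ≤ t - 1 := by
  have hr : l.getD (t - 1) 0 = l.get ⟨t - 1, h2⟩ := List.getD_eq_get _ _ ⟨t - 1, h2⟩
  have hsplit : l = l.take (t - 1) ++ l.drop (t - 1) := (List.take_append_drop _ l).symm
  rw [hsplit]
  rw [List.countP_append]
  have hdrop : (l.drop (t - 1)).countP (fun x => decide (x < l.getD (t - 1) 0)) = 0 := by
    rw [List.countP_eq_zero]
    intro x hx
    obtain ⟨j, hj, hxe⟩ := List.mem_iff_getElem.1 hx
    have hjl : t - 1 + j < l.length := by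
      have : (l.drop (t - 1)).length = l.length - (t - 1) := List.length_drop; omega
    have hget : (l.drop (t - 1))[j] = l[t - 1 + j] := by
      rw [List.getElem_drop]
    have hle : l.getD (t - 1) 0 ≤ x := by
      rw [← hxe, hget, hr]
      have := hs.rel_get_of_le (a := ⟨t - 1, h2⟩) (b := ⟨t - 1 + j, hjl⟩) (by simp)
      simpa using this
    simp only [decide_eq_true_eq]
    exact not_lt.2 hle
  have htake := List.countP_le_length (l := l.take (t - 1))
      (p := fun x => decide (x < l.getD (t - 1) 0))
  have : (l.take (t - 1)).length ≤ t - 1 := by simp [List.length_take]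
  -- note getD over the appended list equals original since we rewrote l
  rw [← hsplit, hdrop]
  omega

/-- `x ≤ t`-th smallest of `M` iff fewer than `t` elements of `M` are `< x`. -/
lemma le_quantile_iff {M : Multiset ℝ} {t : ℕ} (h1 : 1 ≤ t) (h2 : t ≤ Multiset.card M)
    (x : ℝ) :
    x ≤ (Multiset.sort M (· ≤ ·)).getD (t - 1) 0 ↔
      (M.filter (fun v => v < x)).card ≤ t - 1 := by
  set l := Multiset.sort M (· ≤ ·) with hl
  have hsort : l.Pairwise (· ≤ ·) := Multiset.pairwise_sort _ _
  have hlen : l.length = Multiset.card M := Multiset.length_sort _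
  have hcount : (M.filter (fun v => v < x)).card = l.countP (fun v => decide (v < x)) := by
    have : M = (l : Multiset ℝ) := (Multiset.sort_eq _ _).symm
    rw [this]
    simp [List.countP_eq_length_filter]
  constructor
  · intro hx
    rw [hcount]
    calc l.countP (fun v => decide (v < x))
        ≤ l.countP (fun v => decide (v < l.getD (t - 1) 0)) := by
          apply List.countP_mono_left
          intro v hv hvx
          simp only [decide_eq_true_eq] at hvx ⊢
          exact lt_of_lt_of_le hvx hx
      _ ≤ t - 1 := count_lt_le_of_sorted hsort h1 (by omega)
  · intro hc
    by_contra hx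
    push_neg at hx
    have : t ≤ l.countP (fun v => decide (v ≤ l.getD (t - 1) 0)) :=
      count_le_le_of_sorted hsort h1 (by omega)
    have hmono : l.countP (fun v => decide (v ≤ l.getD (t - 1) 0))
        ≤ l.countP (fun v => decide (v < x)) := by
      apply List.countP_mono_left
      intro v hv hvx
      simp only [decide_eq_true_eq] at hvx ⊢
      exact lt_of_le_of_lt hvx hx
    rw [hcount] at hc
    omega

/-- Quantile of an erased multiset dominates the quantile of the original. -/
lemma quantile_erase_ge {M : Multiset ℝ} {b : ℝ} (hb : b ∈ M) {t : ℕ}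
    (ht : t - 1 < Multiset.card M - 1) :
    (Multiset.sort M (· ≤ ·)).getD (t - 1) 0
      ≤ (Multiset.sort (M.erase b) (· ≤ ·)).getD (t - 1) 0 := by
  have hle : M.erase b ≤ M := Multiset.erase_le b M
  have hsub : List.Sublist (Multiset.sort (M.erase b) (· ≤ ·)) (Multiset.sort M (· ≤ ·)) := by
    apply List.sublist_of_subperm_of_pairwise _ (Multiset.pairwise_sort _ _)
      (Multiset.pairwise_sort _ _)
    rw [← Multiset.coe_le, Multiset.sort_eq, Multiset.sort_eq]
    exact hle
  have hlen : t - 1 < (Multiset.sort (M.erase b) (· ≤ ·)).length := by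
    rw [Multiset.length_sort, Multiset.card_erase_of_mem hb]
    simp only [Nat.pred_eq_sub_one]
    omega
  exact getD_le_getD_of_sublist hsub (Multiset.pairwise_sort _ _) hlen

/-- Counting lemma: at least `t` of the `j ∈ A` have score at most the `t`-th smallest of
the remaining scores. -/
lemma counting {ι : Type*} [DecidableEq ι] (A : Finset ι) (f : ι → ℝ) (t : ℕ)
    (h1 : 1 ≤ t) (h2 : t < A.card) :
    t ≤ (A.filter (fun j => f j ≤
        (Multiset.sort ((A.erase j).val.map f) (· ≤ ·)).getD (t - 1) 0)).card := by
  set M := A.val.map f with hM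
  have hcard : Multiset.card M = A.card := by simp [hM]
  set r := (Multiset.sort M (· ≤ ·)).getD (t - 1) 0 with hr
  have step1 : t ≤ (A.filter (fun j => f j ≤ r)).card := by
    have h := count_le_le_of_sorted (Multiset.pairwise_sort M (· ≤ ·)) h1
        (t := t) (by rw [Multiset.length_sort, hcard]; omega)
    have heq : (Multiset.sort M (· ≤ ·)).countP (fun x => decide (x ≤ r))
        = (A.filter (fun j => f j ≤ r)).card := by
      have h1' : Multiset.countP (fun x => x ≤ r) M
          = (Multiset.sort M (· ≤ ·)).countP (fun x => decide (x ≤ r)) := by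
        conv_lhs => rw [← Multiset.sort_eq M (· ≤ ·)]
        rw [Multiset.coe_countP]
      rw [← h1', hM, Multiset.countP_map]
      rfl
    rw [heq] at h
    exact h
  refine le_trans step1 (Finset.card_le_card ?_)
  intro j hj
  simp only [Finset.mem_filter] at hj ⊢
  obtain ⟨hjA, hjr⟩ := hj
  refine ⟨hjA, le_trans hjr ?_⟩
  have hMj : (A.erase j).val.map f = M.erase (f j) := by
    rw [Finset.erase_val]
    have hcons : A.val = j ::ₘ A.val.erase j :=
      (Multiset.cons_erase (Finset.mem_def.2 hjA)).symm
    have hM2 : M = f j ::ₘ (A.val.erase j).map f := by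
      rw [hM]; conv_lhs => rw [hcons]
      rw [Multiset.map_cons]
    rw [hM2, Multiset.erase_cons_head]
  rw [hMj]
  exact quantile_erase_ge (Multiset.mem_map_of_mem f (Finset.mem_def.2 hjA))
    (by rw [hcard]; omega)

open MeasureTheory ProbabilityTheory


/-- The membership-pattern event. -/
def memSet {ι β : Type*} (g : β → Prop) (A : Finset ι) : Set (ι → β) :=
  {z | ∀ i, g (z i) ↔ i ∈ A}

/-- The per-index coverage event. -/
noncomputable def covSet {ι β : Type*} [DecidableEq ι] (f : β → ℝ) (A : Finset ι) (j : ι)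
    (t : ℕ) : Set (ι → β) :=
  {z | A.card - 1 < t ∨ f (z j) ≤
      (Multiset.sort ((A.erase j).val.map (fun i => f (z i))) (· ≤ ·)).getD (t - 1) 0}

lemma mem_memSet {ι β : Type*} {g : β → Prop} {A : Finset ι} {z : ι → β} :
    z ∈ memSet g A ↔ ∀ i, g (z i) ↔ i ∈ A := Iff.rfl

lemma mem_covSet {ι β : Type*} [DecidableEq ι] {f : β → ℝ} {A : Finset ι} {j : ι} {t : ℕ}
    {z : ι → β} : z ∈ covSet f A j t ↔ (A.card - 1 < t ∨ f (z j) ≤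
      (Multiset.sort ((A.erase j).val.map (fun i => f (z i))) (· ≤ ·)).getD (t - 1) 0) := Iff.rfl

lemma memSet_measurable {ι β : Type*} [Countable ι] [MeasurableSpace β] {g : β → Prop}
    (hg : MeasurableSet {b | g b}) (A : Finset ι) : MeasurableSet (memSet g A) := by
  have h : memSet g A = ⋂ i, {z : ι → β | g (z i) ↔ i ∈ A} := by
    ext z; simp [memSet, Set.mem_iInter]
  rw [h]
  refine MeasurableSet.iInter fun i => ?_
  have hbase : MeasurableSet {z : ι → β | g (z i)} := (measurable_pi_apply i) hg
  by_cases hi : i ∈ A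
  · simpa [hi] using hbase
  · have : {z : ι → β | g (z i) ↔ i ∈ A} = {z : ι → β | g (z i)}ᶜ := by
      ext z; simp [hi]
    rw [this]; exact hbase.compl

lemma covSet_measurable {ι β : Type*} [DecidableEq ι] [MeasurableSpace β] {f : β → ℝ}
    (hf : Measurable f) (A : Finset ι) (j : ι) (hj : j ∈ A) (t : ℕ) (ht : 1 ≤ t) :
    MeasurableSet (covSet f A j t) := by
  classical
  by_cases hcase : A.card - 1 < t
  · have : covSet f A j t = Set.univ := by
      ext z; simp [covSet, hcase]
    rw [this]; exact MeasurableSet.univ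
  · have h2 : t ≤ A.card - 1 := le_of_not_gt hcase
    have hkey : covSet f A j t
        = (fun z : ι → β => ((A.erase j).filter (fun i => f (z i) < f (z j))).card) ⁻¹'
            {m | m ≤ t - 1} := by
      ext z
      simp only [covSet, Set.mem_setOf_eq, hcase, false_or, Set.mem_preimage]
      rw [le_quantile_iff ht (by
        simp only [Multiset.card_map]
        rw [show Multiset.card (A.erase j).val = (A.erase j).card from rfl,
          Finset.card_erase_of_mem hj]
        omega) (f (z j))]
      have hms : (((A.erase j).val.map (fun i => f (z i))).filter (fun v => v < f (z j))).card
          = ((A.erase j).filter (fun i => f (z i) < f (z j))).card := by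
        rw [← Multiset.countP_eq_card_filter, Multiset.countP_map]
        rfl
      rw [hms]
    rw [hkey]
    have hc : Measurable fun z : ι → β =>
        ((A.erase j).filter (fun i => f (z i) < f (z j))).card := by
      have hrw : (fun z : ι → β => ((A.erase j).filter (fun i => f (z i) < f (z j))).card)
          = fun z => ∑ i ∈ A.erase j, if f (z i) < f (z j) then 1 else 0 := by
        funext z; rw [Finset.card_filter]
      rw [hrw]
      exact Finset.measurable_sum _ fun i _ =>
        Measurable.ite (measurableSet_lt (hf.comp (measurable_pi_apply i))
          (hf.comp (measurable_pi_apply j))) measurable_const measurable_const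
    have hset : ((fun z : ι → β => ((A.erase j).filter (fun i => f (z i) < f (z j))).card) ⁻¹'
          {m | m ≤ t - 1})
        = ⋃ v ∈ Finset.range t, (fun z : ι → β =>
            ((A.erase j).filter (fun i => f (z i) < f (z j))).card) ⁻¹' {v} := by
      ext z
      simp only [Set.mem_preimage, Set.mem_setOf_eq, Set.mem_iUnion, Finset.mem_range,
        Set.mem_singleton_iff]
      constructor
      · intro h; exact ⟨_, by omega, rfl⟩
      · rintro ⟨v, hv, h⟩; omega
    rw [hset]
    exact (Finset.range t).measurableSet_biUnion fun v _ => hc (measurableSet_singleton v)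

lemma swap_preimage {ι β : Type*} [DecidableEq ι] (g : β → Prop) (f : β → ℝ)
    (A : Finset ι) (j l : ι) (hj : j ∈ A) (hl : l ∈ A) (t : ℕ) :
    (fun z : ι → β => z ∘ (Equiv.swap j l)) ⁻¹' (memSet g A ∩ covSet f A l t)
      = memSet g A ∩ covSet f A j t := by
  classical
  set σ : Equiv.Perm ι := Equiv.swap j l with hσ
  have hσinv : ∀ i, σ (σ i) = i := fun i => Equiv.swap_apply_self _ _ _
  have hσl : σ l = j := Equiv.swap_apply_right _ _
  have hσj : σ j = l := Equiv.swap_apply_left _ _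
  have hσA : ∀ i, σ i ∈ A ↔ i ∈ A := by
    intro i
    rcases eq_or_ne i j with rfl | hij
    · simp [hσj, hj, hl]
    rcases eq_or_ne i l with rfl | hil
    · simp [hσl, hj, hl]
    · rw [hσ, Equiv.swap_apply_of_ne_of_ne hij hil]
  have hmapA : Finset.map σ.toEmbedding (A.erase l) = A.erase j := by
    ext x
    simp only [Finset.mem_map, Finset.mem_erase, Equiv.coe_toEmbedding]
    constructor
    · rintro ⟨y, ⟨hyne, hyA⟩, rfl⟩
      refine ⟨fun hc => hyne ?_, (hσA y).2 hyA⟩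
      have := congrArg σ hc
      rwa [hσinv, hσj] at this
    · rintro ⟨hxne, hxA⟩
      refine ⟨σ x, ⟨fun hc => hxne ?_, (hσA x).2 hxA⟩, hσinv x⟩
      have := congrArg σ hc
      rwa [hσinv, hσl] at this
  ext z
  simp only [Set.mem_preimage, Set.mem_inter_iff, mem_memSet, mem_covSet, Function.comp_apply]
  have hmsets : (A.erase l).val.map (fun i => f (z (σ i)))
      = (A.erase j).val.map (fun i => f (z i)) := by
    rw [← hmapA, Finset.map_val, Multiset.map_map]
    rfl
  have hmem_iff : (∀ i, g (z (σ i)) ↔ i ∈ A) ↔ (∀ i, g (z i) ↔ i ∈ A) := by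
    constructor
    · intro h i
      have h2 := h (σ i)
      rwa [hσinv, hσA] at h2
    · intro h i
      rw [h (σ i), hσA]
  rw [hmem_iff, hσl, hmsets]

open MeasureTheory ProbabilityTheory
open scoped ENNReal

lemma map_fun_eq_pi {Ω β : Type*} [MeasurableSpace Ω] [MeasurableSpace β]
    (μ : Measure Ω) [IsProbabilityMeasure μ] {m : ℕ} (Z : Fin m → Ω → β)
    (hm : ∀ i, Measurable (Z i))
    (hindep : iIndepFun Z μ)
    (ν : Measure β) [IsProbabilityMeasure ν] (hid : ∀ i, Measure.map (Z i) μ = ν) :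
    Measure.map (fun ω i => Z i ω) μ = Measure.pi (fun _ => ν) := by
  refine (Measure.pi_eq fun s hs => ?_).symm
  rw [Measure.map_apply (measurable_pi_lambda _ hm) (MeasurableSet.univ_pi hs)]
  have hpre : (fun ω i => Z i ω) ⁻¹' (Set.pi Set.univ s) = ⋂ i ∈ Finset.univ, Z i ⁻¹' s i := by
    ext ω; simp [Set.mem_pi]
  rw [hpre, hindep.measure_inter_preimage_eq_mul Finset.univ (fun i _ => hs i)]
  exact Finset.prod_congr rfl fun i _ => by
    rw [← hid i, Measure.map_apply (hm i) (hs i)]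

/-- The key per-pattern inequality, for any swap-invariant probability measure on `ι → β`. -/
lemma perA {ι β : Type*} [Fintype ι] [DecidableEq ι] [MeasurableSpace β]
    (π : Measure (ι → β)) [IsProbabilityMeasure π]
    (g : β → Prop) (hg : MeasurableSet {b | g b})
    (f : β → ℝ) (hf : Measurable f)
    (hinv : ∀ σ : Equiv.Perm ι, Measure.map (fun z : ι → β => z ∘ σ) π = π)
    (α : ℝ) (hα0 : 0 ≤ α) (hα : α < 1)
    (A : Finset ι) (l : ι) (hl : l ∈ A) :
    ENNReal.ofReal (1 - α) * π (memSet g A)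
      ≤ π (memSet g A ∩ covSet f A l ((⌈(1 - α) * (A.card : ℝ)⌉).toNat)) := by
  classical
  set t := (⌈(1 - α) * (A.card : ℝ)⌉).toNat with ht
  have hcardpos : 0 < A.card := Finset.card_pos.2 ⟨l, hl⟩
  have ht1 : 1 ≤ t := by
    have h1 : (0:ℝ) < (1 - α) * A.card := by
      have h2 : (0:ℝ) < A.card := by exact_mod_cast hcardpos
      nlinarith
    have h3 : (0:ℤ) < ⌈(1 - α) * (A.card:ℝ)⌉ := Int.ceil_pos.2 h1
    omega
  have htle : t ≤ A.card := by
    have h1 : (1 - α) * (A.card:ℝ) ≤ (A.card:ℝ) := by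
      have h2 : (0:ℝ) ≤ (A.card:ℝ) := Nat.cast_nonneg _
      nlinarith
    have h3 : ⌈(1 - α) * (A.card:ℝ)⌉ ≤ (A.card:ℤ) := Int.ceil_le.2 (by exact_mod_cast h1)
    omega
  have htreal : (1 - α) * (A.card:ℝ) ≤ (t:ℝ) := by
    have h1 : (0:ℤ) ≤ ⌈(1 - α) * (A.card:ℝ)⌉ :=
      Int.ceil_nonneg (by nlinarith [(Nat.cast_nonneg A.card : (0:ℝ) ≤ A.card)])
    have h2 : ((t:ℤ):ℝ) = ((⌈(1 - α) * (A.card:ℝ)⌉ : ℤ) : ℝ) := by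
      rw [ht]; norm_cast; omega
    have h3 := Int.le_ceil ((1 - α) * (A.card:ℝ))
    calc (1 - α) * (A.card:ℝ) ≤ ((⌈(1 - α) * (A.card:ℝ)⌉ : ℤ) : ℝ) := h3
      _ = (t:ℝ) := by exact_mod_cast h2.symm
  have hmemm : MeasurableSet (memSet g A) := memSet_measurable hg A
  have hcovm : ∀ j ∈ A, MeasurableSet (covSet f A j t) :=
    fun j hj => covSet_measurable hf A j hj t ht1
  -- swap invariance
  have hswap : ∀ j ∈ A, π (memSet g A ∩ covSet f A j t) = π (memSet g A ∩ covSet f A l t) := by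
    intro j hj
    have hcomp : Measurable fun z : ι → β => z ∘ (Equiv.swap j l) :=
      measurable_pi_lambda _ fun i => measurable_pi_apply _
    calc π (memSet g A ∩ covSet f A j t)
        = π ((fun z : ι → β => z ∘ (Equiv.swap j l)) ⁻¹' (memSet g A ∩ covSet f A l t)) := by
          rw [swap_preimage g f A j l hj hl t]
      _ = (Measure.map (fun z : ι → β => z ∘ (Equiv.swap j l)) π)
            (memSet g A ∩ covSet f A l t) := by
          rw [Measure.map_apply hcomp (hmemm.inter (hcovm l hl))]
      _ = π (memSet g A ∩ covSet f A l t) := by rw [hinv]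
  -- counting
  have hcount : (t : ℝ≥0∞) * π (memSet g A)
      ≤ ∑ j ∈ A, π (memSet g A ∩ covSet f A j t) := by
    have hrw : ∀ j ∈ A, π (memSet g A ∩ covSet f A j t)
        = ∫⁻ z, (memSet g A ∩ covSet f A j t).indicator (1 : (ι → β) → ℝ≥0∞) z ∂π := by
      intro j hj
      rw [lintegral_indicator_one (hmemm.inter (hcovm j hj))]
    rw [Finset.sum_congr rfl hrw, ← lintegral_finset_sum _
      (fun j hj => measurable_one.indicator (hmemm.inter (hcovm j hj)))]
    have hmono : ∀ z, (memSet g A).indicator (fun _ => (t:ℝ≥0∞)) z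
        ≤ ∑ j ∈ A, (memSet g A ∩ covSet f A j t).indicator (1 : (ι → β) → ℝ≥0∞) z := by
      intro z
      by_cases hz : z ∈ memSet g A
      · rw [Set.indicator_of_mem hz]
        have hsum2 : ∑ j ∈ A, (memSet g A ∩ covSet f A j t).indicator (1 : (ι → β) → ℝ≥0∞) z
            = ((A.filter (fun j => z ∈ covSet f A j t)).card : ℝ≥0∞) := by
          rw [Finset.card_filter, Nat.cast_sum]
          refine Finset.sum_congr rfl fun j hj => ?_
          by_cases hc : z ∈ covSet f A j t
          · simp [Set.indicator_of_mem (Set.mem_inter hz hc), hc]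
          · have hnm : z ∉ memSet g A ∩ covSet f A j t := fun h => hc h.2
            simp [Set.indicator_of_notMem hnm, hc]
        rw [hsum2]
        refine Nat.cast_le.2 ?_
        by_cases hcase : A.card - 1 < t
        · have : A.filter (fun j => z ∈ covSet f A j t) = A := by
            refine Finset.filter_true_of_mem fun j hj => Or.inl hcase
          rw [this]; exact htle
        · have h2 : t < A.card := by omega
          refine le_trans (counting A (fun i => f (z i)) t ht1 h2)
            (Finset.card_le_card ?_)
          intro j hj
          simp only [Finset.mem_filter] at hj ⊢
          exact ⟨hj.1, Or.inr hj.2⟩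
      · simp [Set.indicator_of_notMem hz]
    calc (t : ℝ≥0∞) * π (memSet g A)
        = ∫⁻ z, (memSet g A).indicator (fun _ => (t:ℝ≥0∞)) z ∂π := by
          rw [lintegral_indicator_const hmemm]
      _ ≤ _ := lintegral_mono hmono
  have hsum : ∑ j ∈ A, π (memSet g A ∩ covSet f A j t)
      = (A.card : ℝ≥0∞) * π (memSet g A ∩ covSet f A l t) := by
    rw [Finset.sum_congr rfl hswap, Finset.sum_const, nsmul_eq_mul]
  rw [hsum] at hcount
  have hcard0 : (A.card : ℝ≥0∞) ≠ 0 := by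
    simp only [ne_eq, Nat.cast_eq_zero]
    omega
  have hcardT : (A.card : ℝ≥0∞) ≠ ⊤ := ENNReal.natCast_ne_top _
  rw [← ENNReal.mul_le_mul_iff_right hcard0 hcardT]
  calc (A.card : ℝ≥0∞) * (ENNReal.ofReal (1 - α) * π (memSet g A))
      = ((A.card : ℝ≥0∞) * ENNReal.ofReal (1 - α)) * π (memSet g A) := by
        rw [mul_assoc]
    _ ≤ (t : ℝ≥0∞) * π (memSet g A) := by
        refine mul_le_mul_left ?_ _
        rw [← ENNReal.ofReal_natCast A.card, ← ENNReal.ofReal_mul (Nat.cast_nonneg _),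
          ← ENNReal.ofReal_natCast t]
        exact ENNReal.ofReal_le_ofReal (by rw [mul_comm]; exact htreal)
    _ ≤ (A.card : ℝ≥0∞) * π (memSet g A ∩ covSet f A l t) := hcount

end SCAux
/-- Group-conditional coverage of split-conformal prediction with a fixed measurable
partition `{𝒳_1, ..., 𝒳_K}`: for i.i.d. data and each group `k` of positive probability,
`P(Y_{n+1} ∈ Ĉ(X_{n+1}) | X_{n+1} ∈ 𝒳_k) ≥ 1 - α`. -/
theorem fixed_partition_group_conditional_coverage
    {Ω 𝒳 𝒴 : Type*} [MeasurableSpace Ω] [MeasurableSpace 𝒳] [MeasurableSpace 𝒴]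
    (μ : Measure Ω) [IsProbabilityMeasure μ]
    (n K : ℕ)
    (X : Fin (n + 1) → Ω → 𝒳) (Y : Fin (n + 1) → Ω → 𝒴)
    (hmeas : ∀ i, Measurable (fun ω => (X i ω, Y i ω)))
    (hident : ∀ i, Measure.map (fun ω => (X i ω, Y i ω)) μ
        = Measure.map (fun ω => (X 0 ω, Y 0 ω)) μ)
    (hindep : iIndepFun (fun i ω => (X i ω, Y i ω)) μ)
    (S : 𝒳 → 𝒴 → ℝ) (hS : Measurable (fun p : 𝒳 × 𝒴 => S p.1 p.2))
    (Xs : Fin K → Set 𝒳)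
    (hXsmeas : ∀ k, MeasurableSet (Xs k))
    (hdisj : Pairwise (Function.onFun Disjoint Xs))
    (hcover : (⋃ k, Xs k) = Set.univ)
    (hpos : ∀ k, 0 < μ {ω | X 0 ω ∈ Xs k})
    (α : ℝ) (hα0 : 0 ≤ α) (hα1 : α ≤ 1) (k : Fin K) :
    ENNReal.ofReal (1 - α)
      ≤ ProbabilityTheory.cond μ {ω | X (Fin.last n) ω ∈ Xs k}
          (groupCoverageEvent n X Y S (Xs k) α) := by

  classical
  rcases eq_or_lt_of_le hα1 with hα | hα
  · have h0 : ENNReal.ofReal (1 - α) = 0 := by rw [hα]; norm_num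
    rw [h0]
    exact zero_le
  set g : 𝒳 × 𝒴 → Prop := fun b => b.1 ∈ Xs k with hg
  set f : 𝒳 × 𝒴 → ℝ := fun b => S b.1 b.2 with hfd
  set Z : Fin (n + 1) → Ω → 𝒳 × 𝒴 := fun i ω => (X i ω, Y i ω) with hZ
  set W : Ω → Fin (n + 1) → 𝒳 × 𝒴 := fun ω i => Z i ω with hW
  set ν : Measure (𝒳 × 𝒴) := Measure.map (Z 0) μ with hν
  have hνp : IsProbabilityMeasure ν := Measure.isProbabilityMeasure_map (hmeas 0).aemeasurable
  set π : Measure (Fin (n + 1) → 𝒳 × 𝒴) := Measure.pi (fun _ => ν) with hπ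
  have hπp : IsProbabilityMeasure π := by rw [hπ]; infer_instance
  have hWm : Measurable W := measurable_pi_lambda _ hmeas
  have hmap : Measure.map W μ = π := SCAux.map_fun_eq_pi μ Z hmeas hindep ν hident
  have hgm : MeasurableSet {b : 𝒳 × 𝒴 | g b} := measurable_fst (hXsmeas k)
  have hfm : Measurable f := hS
  -- permutation invariance of the product measure
  have hinv : ∀ σ : Equiv.Perm (Fin (n + 1)),
      Measure.map (fun z : Fin (n + 1) → 𝒳 × 𝒴 => z ∘ σ) π = π := by
    intro σ
    have h1 : MeasurePreserving
        (MeasurableEquiv.piCongrLeft (fun _ : Fin (n + 1) => 𝒳 × 𝒴) σ.symm) π π :=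
      MeasureTheory.measurePreserving_piCongrLeft (fun _ => ν) σ.symm
    have h2 : (fun z : Fin (n + 1) → 𝒳 × 𝒴 => z ∘ σ)
        = ⇑(MeasurableEquiv.piCongrLeft (fun _ : Fin (n + 1) => 𝒳 × 𝒴) σ.symm) := by
      funext z
      funext i
      rw [MeasurableEquiv.coe_piCongrLeft]
      conv_rhs => rw [show i = σ.symm (σ i) from (Equiv.symm_apply_apply σ i).symm]
      rw [Equiv.piCongrLeft_apply_apply]
      rfl
    rw [h2, h1.map_eq]
  set 𝒜 : Finset (Finset (Fin (n + 1))) :=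
    Finset.univ.filter (fun A => Fin.last n ∈ A) with h𝒜
  have hμpre : ∀ T : Set (Fin (n + 1) → 𝒳 × 𝒴), MeasurableSet T → μ (W ⁻¹' T) = π T := by
    intro T hT
    rw [← hmap, Measure.map_apply hWm hT]
  have hmemm : ∀ A : Finset (Fin (n + 1)), MeasurableSet (SCAux.memSet g A) :=
    fun A => SCAux.memSet_measurable hgm A
  have ht1 : ∀ A : Finset (Fin (n + 1)), Fin.last n ∈ A →
      1 ≤ (⌈(1 - α) * (A.card : ℝ)⌉).toNat := by
    intro A hlA
    have hcardpos : 0 < A.card := Finset.card_pos.2 ⟨_, hlA⟩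
    have h1 : (0:ℝ) < (1 - α) * A.card := by
      have h2 : (0:ℝ) < A.card := by exact_mod_cast hcardpos
      nlinarith
    have h3 : (0:ℤ) < ⌈(1 - α) * (A.card:ℝ)⌉ := Int.ceil_pos.2 h1
    omega
  have hcovm : ∀ A : Finset (Fin (n + 1)), Fin.last n ∈ A →
      MeasurableSet (SCAux.covSet f A (Fin.last n) ((⌈(1 - α) * (A.card : ℝ)⌉).toNat)) :=
    fun A hlA => SCAux.covSet_measurable hfm A _ hlA _ (ht1 A hlA)
  -- decomposition of the conditioning event
  have hs_eq : {ω | X (Fin.last n) ω ∈ Xs k} = ⋃ A ∈ 𝒜, W ⁻¹' (SCAux.memSet g A) := by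
    ext ω
    simp only [Set.mem_setOf_eq, Set.mem_iUnion, Set.mem_preimage, h𝒜, Finset.mem_filter,
      Finset.mem_univ, true_and, SCAux.mem_memSet]
    constructor
    · intro hω
      refine ⟨Finset.univ.filter (fun i => X i ω ∈ Xs k), by simp [hω], fun i => ?_⟩
      simp only [Finset.mem_filter, Finset.mem_univ, true_and]
      try exact Iff.rfl
    · rintro ⟨A, hlA, hA⟩
      exact (hA (Fin.last n)).2 hlA
  have hpd : (↑𝒜 : Set (Finset (Fin (n + 1)))).PairwiseDisjoint
      (fun A => W ⁻¹' (SCAux.memSet g A)) := by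
    intro A _ B _ hAB
    rw [Function.onFun, Set.disjoint_left]
    intro ω h1 h2
    rw [Set.mem_preimage, SCAux.mem_memSet] at h1 h2
    exact hAB (by ext i; exact (h1 i).symm.trans (h2 i))
  have hpd2 : (↑𝒜 : Set (Finset (Fin (n + 1)))).PairwiseDisjoint
      (fun A => W ⁻¹' (SCAux.memSet g A ∩
        SCAux.covSet f A (Fin.last n) ((⌈(1 - α) * (A.card : ℝ)⌉).toNat))) :=
    hpd.mono fun A => Set.preimage_mono Set.inter_subset_left
  have hsmeas : MeasurableSet {ω | X (Fin.last n) ω ∈ Xs k} := by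
    have h1 : {ω | X (Fin.last n) ω ∈ Xs k}
        = Z (Fin.last n) ⁻¹' {b : 𝒳 × 𝒴 | b.1 ∈ Xs k} := rfl
    rw [h1]
    exact hmeas _ (measurable_fst (hXsmeas k))
  have hμs : μ {ω | X (Fin.last n) ω ∈ Xs k} = ∑ A ∈ 𝒜, π (SCAux.memSet g A) := by
    rw [hs_eq, measure_biUnion_finset hpd (fun A _ => hWm (hmemm A))]
    exact Finset.sum_congr rfl fun A _ => hμpre _ (hmemm A)
  -- the calibration multiset over a fixed membership pattern
  have hcal : ∀ A : Finset (Fin (n + 1)), Fin.last n ∈ A → ∀ ω, W ω ∈ SCAux.memSet g A →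
      calibGroupScores n X Y S (Xs k) ω
        = (A.erase (Fin.last n)).val.map (fun i => f (W ω i)) := by
    intro A hlA ω hω
    rw [SCAux.mem_memSet] at hω
    unfold calibGroupScores
    have hfil : Finset.univ.filter (fun i : Fin n => X i.castSucc ω ∈ Xs k)
        = Finset.univ.filter (fun i : Fin n => i.castSucc ∈ A) :=
      Finset.filter_congr fun i _ => hω i.castSucc
    rw [hfil]
    have hFm : (Finset.univ.filter (fun i : Fin n => i.castSucc ∈ A)).map
        ⟨Fin.castSucc, Fin.castSucc_injective n⟩ = A.erase (Fin.last n) := by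
      ext x
      simp only [Finset.mem_map, Finset.mem_filter, Finset.mem_univ, true_and,
        Function.Embedding.coeFn_mk, Finset.mem_erase]
      constructor
      · rintro ⟨y, hy, rfl⟩
        exact ⟨(Fin.castSucc_lt_last y).ne, hy⟩
      · rintro ⟨hxl, hxA⟩
        obtain ⟨y, rfl⟩ := Fin.exists_castSucc_eq.mpr hxl
        exact ⟨y, hxA, rfl⟩
    rw [← hFm, Finset.map_val, Multiset.map_map]
    rfl
  -- bridging the coverage event with `covSet`
  have hbridge : ∀ A : Finset (Fin (n + 1)), Fin.last n ∈ A → ∀ ω, W ω ∈ SCAux.memSet g A →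
      (ω ∈ groupCoverageEvent n X Y S (Xs k) α ↔
        W ω ∈ SCAux.covSet f A (Fin.last n) ((⌈(1 - α) * (A.card : ℝ)⌉).toNat)) := by
    intro A hlA ω hω
    have hc := hcal A hlA ω hω
    have h1le : 1 ≤ A.card := Finset.card_pos.2 ⟨_, hlA⟩
    have hcardm : Multiset.card ((A.erase (Fin.last n)).val.map (fun i => f (W ω i)))
        = A.card - 1 := by
      simp only [Multiset.card_map, Finset.erase_val]
      rw [Multiset.card_erase_of_mem (Finset.mem_def.2 hlA)]
      have hv : Multiset.card A.val = A.card := rfl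
      rw [Nat.pred_eq_sub_one, hv]
    have hcast : ((A.card - 1 : ℕ) : ℝ) + 1 = (A.card : ℝ) := by
      rw [Nat.cast_sub h1le]
      ring
    simp only [groupCoverageEvent, Set.mem_setOf_eq, SCAux.mem_covSet, hc, hcardm]
    rw [hcast]
  have hμsE : μ ({ω | X (Fin.last n) ω ∈ Xs k} ∩ groupCoverageEvent n X Y S (Xs k) α)
      = ∑ A ∈ 𝒜, π (SCAux.memSet g A ∩
          SCAux.covSet f A (Fin.last n) ((⌈(1 - α) * (A.card : ℝ)⌉).toNat)) := by
    have hE_eq : {ω | X (Fin.last n) ω ∈ Xs k} ∩ groupCoverageEvent n X Y S (Xs k) α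
        = ⋃ A ∈ 𝒜, W ⁻¹' (SCAux.memSet g A ∩
            SCAux.covSet f A (Fin.last n) ((⌈(1 - α) * (A.card : ℝ)⌉).toNat)) := by
      ext ω
      simp only [Set.mem_inter_iff, Set.mem_setOf_eq, Set.mem_iUnion, Set.mem_preimage,
        h𝒜, Finset.mem_filter, Finset.mem_univ, true_and]
      constructor
      · rintro ⟨hωs, hωE⟩
        have hlA : Fin.last n ∈ Finset.univ.filter (fun i => X i ω ∈ Xs k) := by simp [hωs]
        have hmem : W ω ∈ SCAux.memSet g (Finset.univ.filter (fun i => X i ω ∈ Xs k)) := by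
          rw [SCAux.mem_memSet]
          intro i
          simp only [Finset.mem_filter, Finset.mem_univ, true_and]
          try exact Iff.rfl
        exact ⟨_, hlA, hmem, (hbridge _ hlA ω hmem).1 hωE⟩
      · rintro ⟨A, hlA, hmem, hcov⟩
        exact ⟨((SCAux.mem_memSet.1 hmem) (Fin.last n)).2 hlA,
          (hbridge A hlA ω hmem).2 hcov⟩
    have hAm : ∀ A ∈ 𝒜, MeasurableSet (SCAux.memSet g A ∩
        SCAux.covSet f A (Fin.last n) ((⌈(1 - α) * (A.card : ℝ)⌉).toNat)) := by
      intro A hA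
      have hlA : Fin.last n ∈ A := (Finset.mem_filter.1 hA).2
      exact (hmemm A).inter (hcovm A hlA)
    rw [hE_eq, measure_biUnion_finset hpd2 (fun A hA => hWm (hAm A hA))]
    exact Finset.sum_congr rfl fun A hA => hμpre _ (hAm A hA)
  have hkey : ENNReal.ofReal (1 - α) * μ {ω | X (Fin.last n) ω ∈ Xs k}
      ≤ μ ({ω | X (Fin.last n) ω ∈ Xs k} ∩ groupCoverageEvent n X Y S (Xs k) α) := by
    rw [hμs, hμsE, Finset.mul_sum]
    refine Finset.sum_le_sum fun A hA => ?_
    have hlA : Fin.last n ∈ A := (Finset.mem_filter.1 hA).2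
    exact SCAux.perA π g hgm f hfm hinv α hα0 hα A (Fin.last n) hlA
  have hμs0 : μ {ω | X (Fin.last n) ω ∈ Xs k} ≠ 0 := by
    have h1 : μ {ω | X (Fin.last n) ω ∈ Xs k} = μ {ω | X 0 ω ∈ Xs k} := by
      calc μ {ω | X (Fin.last n) ω ∈ Xs k}
          = μ (Z (Fin.last n) ⁻¹' {b : 𝒳 × 𝒴 | b.1 ∈ Xs k}) := rfl
        _ = (Measure.map (Z (Fin.last n)) μ) {b : 𝒳 × 𝒴 | b.1 ∈ Xs k} :=
            (Measure.map_apply (hmeas _) (measurable_fst (hXsmeas k))).symm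
        _ = (Measure.map (Z 0) μ) {b : 𝒳 × 𝒴 | b.1 ∈ Xs k} := by
            rw [show Measure.map (Z (Fin.last n)) μ = Measure.map (Z 0) μ from
              hident (Fin.last n)]
        _ = μ (Z 0 ⁻¹' {b : 𝒳 × 𝒴 | b.1 ∈ Xs k}) :=
            Measure.map_apply (hmeas 0) (measurable_fst (hXsmeas k))
        _ = μ {ω | X 0 ω ∈ Xs k} := rfl
    rw [h1]
    exact (hpos k).ne'
  have hμsT : μ {ω | X (Fin.last n) ω ∈ Xs k} ≠ ⊤ := measure_ne_top μ _
  rw [ProbabilityTheory.cond_apply hsmeas]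
  calc ENNReal.ofReal (1 - α)
      = ENNReal.ofReal (1 - α) * ((μ {ω | X (Fin.last n) ω ∈ Xs k})⁻¹
          * μ {ω | X (Fin.last n) ω ∈ Xs k}) := by
        rw [ENNReal.inv_mul_cancel hμs0 hμsT, mul_one]
    _ = (μ {ω | X (Fin.last n) ω ∈ Xs k})⁻¹
          * (ENNReal.ofReal (1 - α) * μ {ω | X (Fin.last n) ω ∈ Xs k}) := by ring
    _ ≤ _ := mul_le_mul_right hkey _
end

section
/- Suppose C^{(1)},...,C^{(h)} are random sets each satisfying P(Y ∈ C^{(i)}) ≥ 1 - β. Define the majority-vote set C^M = {y : (1/h)·#{i : y ∈ C^{(i)}} > 1/2}. Then P(Y ∈ C^M) ≥ 1 - 2β. -/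
open MeasureTheory
open scoped ENNReal Classical

/-- Majority-vote aggregation of prediction sets: if each random set `C i` satisfies
`P(Y ∈ C i) ≥ 1 - β`, then the majority-vote set
`C^M = {y : (1/h) #{i : y ∈ C i} > 1/2}` satisfies `P(Y ∈ C^M) ≥ 1 - 2β`. -/
theorem majority_vote_coverage {Ω 𝒴 : Type*} [MeasurableSpace Ω]
    (μ : Measure Ω) [IsProbabilityMeasure μ]
    (h : ℕ) (hh : 0 < h) (Y : Ω → 𝒴)
    (C : Fin h → Ω → Set 𝒴)
    (hmeas : ∀ i, MeasurableSet {ω | Y ω ∈ C i ω})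
    (β : ℝ)
    (hcov : ∀ i, ENNReal.ofReal (1 - β) ≤ μ {ω | Y ω ∈ C i ω}) :
    ENNReal.ofReal (1 - 2 * β)
      ≤ μ {ω | (1 / (h : ℝ)) * ((Finset.univ.filter (fun i => Y ω ∈ C i ω)).card : ℝ)
            > 1 / 2} := by
  -- β ≥ 0
  have hβ0 : 0 ≤ β := by
    have h1 := (hcov ⟨0, hh⟩).trans prob_le_one
    rw [ENNReal.ofReal_le_one] at h1
    linarith
  by_cases hβhalf : 1 ≤ 2 * β
  · rw [ENNReal.ofReal_eq_zero.2 (by linarith)]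
    exact zero_le
  push_neg at hβhalf
  -- miss events
  set B : Fin h → Set Ω := fun i => {ω | Y ω ∈ C i ω}ᶜ with hB
  have hBmeas : ∀ i, MeasurableSet (B i) := fun i => (hmeas i).compl
  have hμB : ∀ i, μ (B i) ≤ ENNReal.ofReal β := by
    intro i
    have := measure_compl (hmeas i) (measure_ne_top μ _)
    rw [hB]
    rw [this, measure_univ]
    calc 1 - μ {ω | Y ω ∈ C i ω} ≤ 1 - ENNReal.ofReal (1 - β) :=
          tsub_le_tsub_left (hcov i) 1
      _ = ENNReal.ofReal β := by
          rw [← ENNReal.ofReal_one, ← ENNReal.ofReal_sub _ (by linarith)]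
          norm_num
  -- miss-count function
  set f : Ω → ℝ≥0∞ := fun ω => ∑ i : Fin h, (B i).indicator (fun _ => (1 : ℝ≥0∞)) ω with hf
  have hfmeas : ∀ i : Fin h, Measurable ((B i).indicator (fun _ => (1 : ℝ≥0∞))) :=
    fun i => measurable_const.indicator (hBmeas i)
  have hint : ∫⁻ ω, f ω ∂μ ≤ (h : ℝ≥0∞) * ENNReal.ofReal β := by
    rw [hf]
    rw [lintegral_finset_sum _ (fun i _ => hfmeas i)]
    calc ∑ i : Fin h, ∫⁻ ω, (B i).indicator (fun _ => (1:ℝ≥0∞)) ω ∂μ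
        = ∑ i : Fin h, μ (B i) := by
          refine Finset.sum_congr rfl fun i _ => ?_
          simp [lintegral_indicator, hBmeas i]
      _ ≤ ∑ _i : Fin h, ENNReal.ofReal β := Finset.sum_le_sum fun i _ => hμB i
      _ = (h : ℝ≥0∞) * ENNReal.ofReal β := by
          rw [Finset.sum_const, Finset.card_univ, Fintype.card_fin, nsmul_eq_mul]
  -- complement of goal set is contained in {f ≥ h/2}
  set G : Set Ω := {ω | (1 / (h : ℝ)) * ((Finset.univ.filter (fun i => Y ω ∈ C i ω)).card : ℝ)
            > 1 / 2} with hG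
  have hfval : ∀ ω, f ω = ((Finset.univ.filter (fun i => Y ω ∉ C i ω)).card : ℝ≥0∞) := by
    intro ω
    rw [hf]
    simp only [Set.indicator_apply, hB, Set.mem_compl_iff, Set.mem_setOf_eq]
    rw [Finset.sum_boole]
  -- complement containment
  have hsub : Gᶜ ⊆ {ω | (h : ℝ≥0∞) / 2 ≤ f ω} := by
    intro ω hω
    simp only [hG, Set.mem_compl_iff, Set.mem_setOf_eq, not_lt] at hω
    have hωle : ((Finset.univ.filter (fun i => Y ω ∈ C i ω)).card : ℝ) ≤ h / 2 := by
      have hhpos : (0:ℝ) < h := by exact_mod_cast hh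
      rw [one_div, inv_mul_le_iff₀ hhpos] at hω
      linarith [hω]
    have hcards : (Finset.univ.filter (fun i => Y ω ∈ C i ω)).card
        + (Finset.univ.filter (fun i => Y ω ∉ C i ω)).card = h := by
      rw [Finset.card_filter_add_card_filter_not]
      simp
    have hmiss : (h : ℝ) / 2 ≤ ((Finset.univ.filter (fun i => Y ω ∉ C i ω)).card : ℝ) := by
      have : ((Finset.univ.filter (fun i => Y ω ∈ C i ω)).card : ℝ)
          + ((Finset.univ.filter (fun i => Y ω ∉ C i ω)).card : ℝ) = h := by
        exact_mod_cast hcards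
      linarith
    simp only [Set.mem_setOf_eq, hfval ω]
    rw [ENNReal.div_le_iff (by norm_num) (by norm_num)]
    have hnat : h ≤ (Finset.univ.filter (fun i => Y ω ∉ C i ω)).card * 2 := by
      have : (h : ℝ) ≤ ((Finset.univ.filter (fun i => Y ω ∉ C i ω)).card : ℝ) * 2 := by
        linarith
      exact_mod_cast this
    exact_mod_cast hnat
  -- measurability of G
  have gmeas : Measurable (fun ω => ((Finset.univ.filter (fun i => Y ω ∈ C i ω)).card : ℝ)) := by
    have heq : (fun ω => ((Finset.univ.filter (fun i => Y ω ∈ C i ω)).card : ℝ))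
        = fun ω => ∑ i : Fin h, Set.indicator {ω | Y ω ∈ C i ω} (fun _ => (1:ℝ)) ω := by
      funext ω
      simp only [Set.indicator_apply, Set.mem_setOf_eq]
      rw [Finset.sum_boole]
    rw [heq]
    exact Finset.measurable_sum _ fun i _ => measurable_const.indicator (hmeas i)
  have hGmeas : MeasurableSet G := by
    rw [hG]
    exact measurableSet_lt measurable_const (gmeas.const_mul _)
  have hh0 : (h : ℝ≥0∞) ≠ 0 := by exact_mod_cast hh.ne'
  have hhtop : (h : ℝ≥0∞) ≠ ⊤ := ENNReal.natCast_ne_top h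
  have hε0 : (h : ℝ≥0∞) / 2 ≠ 0 := by
    simp [ENNReal.div_eq_zero_iff, hh0]
  have hεtop : (h : ℝ≥0∞) / 2 ≠ ⊤ := by
    simp [ENNReal.div_eq_top, hhtop]
  have hfAE : AEMeasurable f μ :=
    (Finset.measurable_sum _ fun i _ => hfmeas i).aemeasurable
  have hGc : μ Gᶜ ≤ ENNReal.ofReal (2 * β) := by
    calc μ Gᶜ ≤ μ {ω | (h : ℝ≥0∞) / 2 ≤ f ω} := measure_mono hsub
      _ ≤ (∫⁻ ω, f ω ∂μ) / ((h : ℝ≥0∞) / 2) := meas_ge_le_lintegral_div hfAE hε0 hεtop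
      _ ≤ ((h : ℝ≥0∞) * ENNReal.ofReal β) / ((h : ℝ≥0∞) / 2) :=
          ENNReal.div_le_div_right hint _
      _ ≤ 2 * ENNReal.ofReal β := by
          rw [ENNReal.div_le_iff hε0 hεtop]
          refine le_of_eq ?_
          calc (h : ℝ≥0∞) * ENNReal.ofReal β
              = (2 * ((h : ℝ≥0∞) / 2)) * ENNReal.ofReal β := by
                rw [ENNReal.mul_div_cancel' (by norm_num) (by norm_num)]
            _ = 2 * ENNReal.ofReal β * ((h : ℝ≥0∞) / 2) := by ring
      _ = ENNReal.ofReal (2 * β) := by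
          rw [ENNReal.ofReal_mul (by norm_num)]
          norm_num
  have hcompl : μ Gᶜ = 1 - μ G := by
    rw [measure_compl hGmeas (measure_ne_top μ G), measure_univ]
  rw [hcompl] at hGc
  have h1 : (1 : ℝ≥0∞) ≤ ENNReal.ofReal (2 * β) + μ G := by
    rw [tsub_le_iff_right, add_comm] at hGc
    exact hGc.trans (le_of_eq (add_comm _ _))
  have h2 : (1 : ℝ≥0∞) - ENNReal.ofReal (2 * β) ≤ μ G := tsub_le_iff_left.mpr h1
  calc ENNReal.ofReal (1 - 2 * β) = 1 - ENNReal.ofReal (2 * β) := by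
        rw [ENNReal.ofReal_sub _ (by linarith), ENNReal.ofReal_one]
    _ ≤ μ G := h2
end
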